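/- Let X and Y be first countable compact Hausdorff spaces, each with at least two points, let Δ : C(X) → C(Y) be a 2-local diameter-preserving map, and let φ : X → Y be an injective map such that for every (x₁, x₂) ∈ X × X with x₁ ≠ x₂ there exists β(x₁, x₂) ∈ 𝕋⁺ with Δ(f)(φ(x₁)) − Δ(f)(φ(x₂)) = β(x₁, x₂)·(f(x₁) − f(x₂)) for all f ∈ C(X). Then there exists a single number λ ∈ 𝕋 such that Δ(f)(φ(x₁)) − Δ(f)(φ(x₂)) = λ·(f(x₁) − f(x₂)) for all f ∈ C(X) and all x₁, x₂ ∈ X. -/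

import Mathlib

noncomputable section

/-- The diameter seminorm `ρ(f) = sup{|f(x) - f(z)| : x, z ∈ X}` on `C(X, ℂ)`. -/
def cdiam {X : Type*} [TopologicalSpace X] (f : C(X, ℂ)) : ℝ :=
  ⨆ p : X × X, ‖f p.1 - f p.2‖

/-- A map `Δ : C(X) → C(Y)` is diameter-preserving if `ρ(Δ f - Δ g) = ρ(f - g)` for all `f, g`. -/
def DiamPreserving {X Y : Type*} [TopologicalSpace X] [TopologicalSpace Y]
    (Δ : C(X, ℂ) → C(Y, ℂ)) : Prop :=
  ∀ f g, cdiam (Δ f - Δ g) = cdiam (f - g)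

/-- A map `Δ : C(X) → C(Y)` is a 2-local diameter-preserving map if for every `f, g` there is a
diameter-preserving linear bijection agreeing with `Δ` at `f` and `g`. -/
def TwoLocalDiamPreserving {X Y : Type*} [TopologicalSpace X] [TopologicalSpace Y]
    (Δ : C(X, ℂ) → C(Y, ℂ)) : Prop :=
  ∀ f g : C(X, ℂ), ∃ T : C(X, ℂ) →ₗ[ℂ] C(Y, ℂ),
    Function.Bijective T ∧ DiamPreserving T ∧ T f = Δ f ∧ T g = Δ g

/-- The set `𝕋⁺ = {e^{it} : t ∈ [0, π)}`. -/
def Tplus : Set ℂ :=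
  {z | ∃ t : ℝ, 0 ≤ t ∧ t < Real.pi ∧ z = Complex.exp (t * Complex.I)}

/-- Claim 12: if for every pair of distinct points `x₁, x₂` there is `β(x₁,x₂) ∈ 𝕋⁺` with
`Δ(f)(φ(x₁)) - Δ(f)(φ(x₂)) = β(x₁,x₂)(f(x₁) - f(x₂))` for all `f`, then there is a single
`λ ∈ 𝕋` working for all pairs. -/
theorem exists_uniform_unimodular_constant
    {X Y : Type*} [TopologicalSpace X] [CompactSpace X] [T2Space X] [FirstCountableTopology X]
    [TopologicalSpace Y] [CompactSpace Y] [T2Space Y] [FirstCountableTopology Y]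
    (h2X : ∃ a b : X, a ≠ b) (h2Y : ∃ a b : Y, a ≠ b)
    (Δ : C(X, ℂ) → C(Y, ℂ)) (hΔ : TwoLocalDiamPreserving Δ)
    (φ : X → Y) (hφ : Function.Injective φ)
    (hβ : ∀ x₁ x₂ : X, x₁ ≠ x₂ → ∃ β ∈ Tplus,
      ∀ f : C(X, ℂ), Δ f (φ x₁) - Δ f (φ x₂) = β * (f x₁ - f x₂)) :
    ∃ lam : ℂ, ‖lam‖ = 1 ∧
      ∀ (f : C(X, ℂ)) (x₁ x₂ : X),
        Δ f (φ x₁) - Δ f (φ x₂) = lam * (f x₁ - f x₂) := by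
  classical
  obtain ⟨a, b, hab⟩ := h2X
  obtain ⟨β₀, hβ₀T, hβ₀⟩ := hβ a b hab
  set P : X → X → ℂ → Prop :=
    fun p q β => ∀ f : C(X, ℂ), Δ f (φ p) - Δ f (φ q) = β * (f p - f q) with hP
  have sym : ∀ p q β, P p q β → P q p β := by
    intro p q β h f
    have := h f
    ring_nf
    ring_nf at this
    linear_combination -this
  -- Urysohn-type helper: a complex continuous map that is 1 at p and 0 on a closed set s ∌ p
  have urysohn : ∀ (s : Set X), IsClosed s → ∀ p : X, p ∉ s →
      ∃ f : C(X, ℂ), f p = 1 ∧ ∀ x ∈ s, f x = 0 := by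
    intro s hs p hp
    obtain ⟨g, hg0, hg1, -⟩ := exists_continuous_zero_one_of_isClosed hs
      (isClosed_singleton (x := p)) (by simpa using Set.disjoint_singleton_right.mpr hp)
    refine ⟨⟨fun x => (g x : ℂ), Complex.continuous_ofReal.comp g.continuous⟩, ?_, ?_⟩
    · simp [hg1 (Set.mem_singleton p)]
    · intro x hx; simp [hg0 hx]
  have uniq : ∀ p q, p ≠ q → ∀ β γ, P p q β → P p q γ → β = γ := by
    intro p q hpq β γ hb hg
    obtain ⟨f, hf1, hf0⟩ := urysohn {q} isClosed_singleton p (by simpa using hpq)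
    have h1 := hb f
    have h2 := hg f
    rw [hf1, hf0 q rfl] at h1 h2
    simpa using h1.symm.trans h2
  have key : ∀ p q r, p ≠ q → p ≠ r → q ≠ r → ∀ β γ, P p q β → P p r γ → β = γ := by
    intro p q r hpq hpr hqr β γ hb hg
    obtain ⟨δ, -, hd⟩ := hβ q r hqr
    obtain ⟨f, hf1, hf0⟩ := urysohn {q, r} ((Set.toFinite _).isClosed) p
      (by simp [hpq, hpr])
    have h1 := hb f
    have h2 := hg f
    have h3 := hd f
    simp only [hf1, hf0 q (by simp), hf0 r (by simp), sub_zero, mul_one, sub_self,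
      mul_zero, sub_eq_zero] at h1 h2 h3
    rw [← h1, ← h2, h3]
  have const : ∀ p q, p ≠ q → ∀ β, P p q β → β = β₀ := by
    have hPab : P a b β₀ := hβ₀
    intro p q hpq β hb
    by_cases hpa : p = a
    · subst hpa
      by_cases hqb : q = b
      · subst hqb; exact uniq p q hpq β β₀ hb hPab
      · exact key p q b hpq hab hqb β β₀ hb hPab
    · by_cases hqa : q = a
      · subst hqa
        have hb' : P q p β := sym p q β hb
        by_cases hpb : p = b
        · subst hpb; exact uniq q p hab β β₀ hb' hPab
        · exact key q p b (Ne.symm hpq) hab hpb β β₀ hb' hPab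
      · obtain ⟨δ, -, hd⟩ := hβ p a hpa
        have h1 : β = δ := key p q a hpq hpa hqa β δ hb hd
        have hd' : P a p δ := sym p a δ hd
        by_cases hpb : p = b
        · subst hpb; rw [h1]; exact uniq a p hab δ β₀ hd' hPab
        · rw [h1]; exact key a p b (Ne.symm hpa) hab hpb δ β₀ hd' hPab
  refine ⟨β₀, ?_, ?_⟩
  · obtain ⟨t, -, -, ht⟩ := hβ₀T
    rw [ht, Complex.norm_exp]
    simp
  · intro f x₁ x₂
    by_cases h : x₁ = x₂
    · subst h; simp
    · obtain ⟨β, -, hb⟩ := hβ x₁ x₂ h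
      rw [hb f, const x₁ x₂ h β hb]
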